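/- Let L be the Laplacian of a connected undirected graph on N vertices, Y = (1/N)·1_N·1_N', G = I_N − (1/κ)L with κ > λ_N/2 where λ_N is the largest eigenvalue of L. Suppose sequences x_s ∈ ℝ^{Nm} satisfy x_s = (G ⊗ I_m) x_{s−1} + δ_s w_s, with δ_s > 0, δ_s → 0, and (w_s) bounded. Then the disagreement vector σ_s = ((I_N − Y) ⊗ I_m) x_s converges to 0. -/

import Mathlib

open Matrix
open scoped Kronecker

/-- `L` is the Laplacian of the undirected weighted graph with adjacency matrix `A`. -/
def IsLaplacianOf {N : ℕ} (L A : Matrix (Fin N) (Fin N) ℝ) : Prop :=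
  A.IsSymm ∧ (∀ i j, 0 ≤ A i j) ∧ (∀ i, A i i = 0) ∧
    L = Matrix.diagonal (fun i => ∑ j, A i j) - A

/-- Connectedness of the weighted graph given by adjacency matrix `A`. -/
def GraphConnected {N : ℕ} (A : Matrix (Fin N) (Fin N) ℝ) : Prop :=
  ∀ i j : Fin N, Relation.ReflTransGen (fun a b => 0 < A a b) i j

/- ### Auxiliary lemmas -/

lemma euclid_eq_sqrt {ι : Type*} [Fintype ι] (y : ι → ℝ) :
    ‖(EuclideanSpace.equiv ι ℝ).symm y‖ = Real.sqrt (∑ p, (y p)^2) := by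
  rw [EuclideanSpace.norm_eq]
  simp [Real.norm_eq_abs, sq_abs]

lemma euclid_sq {ι : Type*} [Fintype ι] (y : ι → ℝ) :
    ‖(EuclideanSpace.equiv ι ℝ).symm y‖^2 = ∑ p, (y p)^2 := by
  rw [euclid_eq_sqrt, Real.sq_sqrt (by positivity)]

lemma coord_le_euclid {ι : Type*} [Fintype ι] (y : ι → ℝ) (p : ι) :
    |y p| ≤ ‖(EuclideanSpace.equiv ι ℝ).symm y‖ := by
  rw [euclid_eq_sqrt, ← Real.sqrt_sq_eq_abs]
  exact Real.sqrt_le_sqrt (Finset.single_le_sum (f := fun q => (y q)^2)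
    (fun q _ => sq_nonneg _) (Finset.mem_univ p))

lemma euclid_le_of_bound {ι : Type*} [Fintype ι] (y : ι → ℝ) (c : ℝ) (hc : 0 ≤ c)
    (h : ∀ p, |y p| ≤ c) :
    ‖(EuclideanSpace.equiv ι ℝ).symm y‖ ≤ Real.sqrt (Fintype.card ι) * c := by
  rw [euclid_eq_sqrt, ← Real.sqrt_sq hc, ← Real.sqrt_mul (by positivity)]
  apply Real.sqrt_le_sqrt
  calc ∑ p, (y p)^2 ≤ ∑ _p : ι, c^2 := by
        refine Finset.sum_le_sum fun p _ => ?_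
        rw [← sq_abs]
        exact pow_le_pow_left₀ (abs_nonneg _) (h p) 2
    _ = (Fintype.card ι) * c^2 := by simp [Finset.sum_const, Finset.card_univ, nsmul_eq_mul]

lemma herm_contract {N : ℕ} (A : Matrix (Fin N) (Fin N) ℝ) (hA : A.IsHermitian) (r : ℝ)
    (hr : 0 ≤ r) (he : ∀ i, |hA.eigenvalues i| ≤ r) (v : EuclideanSpace ℝ (Fin N)) :
    ‖(EuclideanSpace.equiv (Fin N) ℝ).symm (A *ᵥ v)‖ ≤ r * ‖v‖ := by
  set b := hA.eigenvectorBasis with hb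
  have hAt : Aᵀ = A := by rw [← Matrix.conjTranspose_eq_transpose_of_trivial]; exact hA.eq
  have hinner : ∀ (u : EuclideanSpace ℝ (Fin N)) (g : Fin N → ℝ),
      (inner ℝ u ((EuclideanSpace.equiv (Fin N) ℝ).symm g) : ℝ) = (u : Fin N → ℝ) ⬝ᵥ g := by
    intro u g; simp [PiLp.inner_apply, dotProduct, mul_comm]
  have hrepr : ∀ i,
      b.repr ((EuclideanSpace.equiv (Fin N) ℝ).symm (A *ᵥ v)) i
        = hA.eigenvalues i * b.repr v i := by
    intro i
    rw [b.repr_apply_apply, b.repr_apply_apply, hinner]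
    have key : A *ᵥ (b i : Fin N → ℝ) = hA.eigenvalues i • (b i : Fin N → ℝ) :=
      hA.mulVec_eigenvectorBasis i
    have h2 : (b i : Fin N → ℝ) ⬝ᵥ (A *ᵥ (v : Fin N → ℝ))
        = (A *ᵥ (b i : Fin N → ℝ)) ⬝ᵥ (v : Fin N → ℝ) := by
      rw [dotProduct_mulVec, ← mulVec_transpose, hAt]
    rw [h2, key, smul_dotProduct]
    congr 1
    simp [PiLp.inner_apply, dotProduct, mul_comm]
  calc ‖(EuclideanSpace.equiv (Fin N) ℝ).symm (A *ᵥ v)‖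
      = ‖b.repr ((EuclideanSpace.equiv (Fin N) ℝ).symm (A *ᵥ v))‖ := (b.repr.norm_map _).symm
    _ ≤ r * ‖b.repr v‖ := by
        rw [EuclideanSpace.norm_eq, EuclideanSpace.norm_eq]
        rw [← Real.sqrt_sq hr, ← Real.sqrt_mul (by positivity)]
        apply Real.sqrt_le_sqrt
        rw [Finset.mul_sum]
        apply Finset.sum_le_sum
        intro i _
        rw [hrepr i, Real.norm_eq_abs, Real.norm_eq_abs, abs_mul, mul_pow]
        exact mul_le_mul_of_nonneg_right (pow_le_pow_left₀ (abs_nonneg _) (he i) 2)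
          (by positivity)
    _ = r * ‖v‖ := by rw [b.repr.norm_map]

lemma kron_mulVec {N m : ℕ} (Bm : Matrix (Fin N) (Fin N) ℝ) (u : Fin N × Fin m → ℝ)
    (i : Fin N) (k : Fin m) :
    ((Bm ⊗ₖ (1 : Matrix (Fin m) (Fin m) ℝ)) *ᵥ u) (i, k) = (Bm *ᵥ fun j => u (j, k)) i := by
  simp [mulVec, dotProduct, Fintype.sum_prod_type, Matrix.one_apply, mul_ite, ite_mul,
    Finset.sum_ite_eq, mul_comm, mul_assoc]

lemma qform {N : ℕ} (A : Matrix (Fin N) (Fin N) ℝ) (hAs : A.IsSymm) (v : Fin N → ℝ) :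
    v ⬝ᵥ ((Matrix.diagonal (fun i => ∑ j, A i j) - A) *ᵥ v)
      = (1/2) * ∑ i, ∑ j, A i j * (v i - v j)^2 := by
  have hswap : ∑ i, ∑ j, A i j * (v j)^2 = ∑ i, ∑ j, A i j * (v i)^2 := by
    rw [Finset.sum_comm]
    exact Finset.sum_congr rfl fun i _ => Finset.sum_congr rfl fun j _ => by rw [hAs.apply i j]
  have hinner : ∀ i, (((Matrix.diagonal fun i => ∑ j, A i j) - A) *ᵥ v) i
      = (∑ j, A i j) * v i - ∑ j, A i j * v j := by
    intro i
    simp [mulVec, dotProduct, Matrix.diagonal_apply, sub_mul, ite_mul, zero_mul,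
      Finset.sum_sub_distrib, Finset.sum_ite_eq, Finset.mem_univ]
  have hLHS : v ⬝ᵥ (((Matrix.diagonal fun i => ∑ j, A i j) - A) *ᵥ v)
      = (∑ i, ∑ j, A i j * (v i)^2) - ∑ i, ∑ j, A i j * (v i * v j) := by
    simp only [dotProduct, hinner, mul_sub]
    rw [Finset.sum_sub_distrib]
    congr 1
    · refine Finset.sum_congr rfl fun i _ => ?_
      rw [Finset.sum_mul, Finset.mul_sum]
      exact Finset.sum_congr rfl fun j _ => by ring
    · refine Finset.sum_congr rfl fun i _ => ?_
      rw [Finset.mul_sum]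
      exact Finset.sum_congr rfl fun j _ => by ring
  have hRHS : ∑ i, ∑ j, A i j * (v i - v j)^2
      = (∑ i, ∑ j, A i j * (v i)^2) - 2 * (∑ i, ∑ j, A i j * (v i * v j))
        + ∑ i, ∑ j, A i j * (v j)^2 := by
    have h : ∀ i j : Fin N, A i j * (v i - v j)^2
        = (A i j * (v i)^2 - 2 * (A i j * (v i * v j))) + A i j * (v j)^2 := by
      intro i j; ring
    simp only [h, Finset.sum_add_distrib, Finset.sum_sub_distrib, ← Finset.mul_sum]
  rw [hLHS, hRHS, hswap]; ring

lemma aux_seq_tendsto (a ε : ℕ → ℝ) (r : ℝ) (hr0 : 0 ≤ r) (hr1 : r < 1)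
    (ha0 : ∀ s, 0 ≤ a s) (hε0 : ∀ s, 0 ≤ ε s)
    (hrec : ∀ s, a (s+1) ≤ r * a s + ε (s+1))
    (hε : Filter.Tendsto ε Filter.atTop (nhds 0)) :
    Filter.Tendsto a Filter.atTop (nhds 0) := by
  rw [Metric.tendsto_atTop]
  intro η hη
  have h1r : 0 < 1 - r := by linarith
  have hpos : 0 < η * (1 - r) / 2 := by positivity
  obtain ⟨S, hS⟩ := Metric.tendsto_atTop.1 hε (η * (1 - r) / 2) hpos
  have key : ∀ n, a (S + n) ≤ r^n * a S + η/2 := by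
    intro n
    induction n with
    | zero => simp; linarith
    | succ n ih =>
      have h1 := hrec (S + n)
      have h2 : ε (S + n + 1) < η * (1 - r) / 2 := by
        have := hS (S + n + 1) (by omega)
        rwa [Real.dist_eq, sub_zero, abs_of_nonneg (hε0 _)] at this
      have h3 : r * a (S + n) ≤ r * (r^n * a S + η/2) := mul_le_mul_of_nonneg_left ih hr0
      have hexp : r * (r^n * a S + η/2) = r^(n+1) * a S + r * (η/2) := by ring
      have hid : r * (η/2) + η * (1 - r) / 2 = η/2 := by ring
      have hidx : S + (n+1) = (S + n) + 1 := by omega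
      rw [hidx]
      linarith
  have htend : Filter.Tendsto (fun n => r^n * a S) Filter.atTop (nhds 0) := by
    simpa using (tendsto_pow_atTop_nhds_zero_of_lt_one hr0 hr1).mul_const (a S)
  obtain ⟨n₀, hn₀⟩ := Metric.tendsto_atTop.1 htend (η/2) (by linarith)
  refine ⟨S + n₀, fun s hs => ?_⟩
  have hkey : a s ≤ r^(s - S) * a S + η/2 := by
    have := key (s - S)
    rwa [Nat.add_sub_cancel' (by omega : S ≤ s)] at this
  have h4 : r^(s - S) * a S < η/2 := by
    have := hn₀ (s - S) (by omega)
    rw [Real.dist_eq, sub_zero] at this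
    calc r^(s-S) * a S ≤ |r^(s-S) * a S| := le_abs_self _
      _ < η/2 := this
  rw [Real.dist_eq, sub_zero, abs_of_nonneg (ha0 s)]
  linarith

theorem stmt7 {N m : ℕ} (hN : 0 < N) (L A : Matrix (Fin N) (Fin N) ℝ)
    (hL : IsLaplacianOf L A) (hconn : GraphConnected A)
    (lamN : ℝ)
    (hlamN : Module.End.HasEigenvalue (Matrix.toLin' L) lamN)
    (hmax : ∀ μ : ℝ, Module.End.HasEigenvalue (Matrix.toLin' L) μ → μ ≤ lamN)
    (κ : ℝ) (hκ : lamN / 2 < κ)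
    (Y G : Matrix (Fin N) (Fin N) ℝ)
    (hY : Y = (N : ℝ)⁻¹ • Matrix.of (fun _ _ => (1 : ℝ)))
    (hG : G = 1 - κ⁻¹ • L)
    (δ : ℕ → ℝ) (hδpos : ∀ s : ℕ, 1 ≤ s → 0 < δ s)
    (hδ0 : Filter.Tendsto δ Filter.atTop (nhds 0))
    (w : ℕ → (Fin N × Fin m → ℝ)) (B : ℝ) (hw : ∀ s : ℕ, ‖w s‖ ≤ B)
    (x : ℕ → (Fin N × Fin m → ℝ))
    (hx : ∀ s : ℕ, 1 ≤ s →
      x s = (G ⊗ₖ (1 : Matrix (Fin m) (Fin m) ℝ)) *ᵥ x (s - 1) + δ s • w s) :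
    Filter.Tendsto (fun s => ((1 - Y) ⊗ₖ (1 : Matrix (Fin m) (Fin m) ℝ)) *ᵥ x s)
      Filter.atTop (nhds 0) := by
  obtain ⟨hAs, hApos, hAdiag, hLdef⟩ := hL
  haveI : Nonempty (Fin N) := ⟨⟨0, hN⟩⟩
  have hNR : (0:ℝ) < N := by exact_mod_cast hN
  set F := G - Y with hFdef
  set P := (1 : Matrix (Fin N) (Fin N) ℝ) - Y with hPdef
  have hYapp : ∀ i j, Y i j = (N:ℝ)⁻¹ := by intro i j; simp [hY]
  have hrow : ∀ i, ∑ j, L i j = 0 := by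
    intro i
    rw [hLdef]
    simp [Matrix.diagonal_apply, Finset.sum_sub_distrib, Finset.sum_ite_eq]
  have hcol : ∀ j, ∑ k, L k j = 0 := by
    intro j
    rw [hLdef]
    simp only [Matrix.sub_apply, Matrix.diagonal_apply, Finset.sum_sub_distrib]
    rw [Finset.sum_ite_eq' Finset.univ j (fun i => ∑ j', A i j')]
    simp only [Finset.mem_univ, if_true]
    rw [sub_eq_zero]
    exact Finset.sum_congr rfl (fun k _ => (hAs.apply j k).symm)
  have hYL : Y * L = 0 := by
    ext i j
    simp only [Matrix.mul_apply, hYapp, Matrix.zero_apply]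
    rw [← Finset.mul_sum, hcol, mul_zero]
  have hLY : L * Y = 0 := by
    ext i j
    simp only [Matrix.mul_apply, hYapp, Matrix.zero_apply]
    rw [← Finset.sum_mul, hrow, zero_mul]
  have hYY : Y * Y = Y := by
    ext i j
    simp only [Matrix.mul_apply, hYapp]
    rw [Finset.sum_const, Finset.card_univ, Fintype.card_fin, nsmul_eq_mul]
    field_simp
  have hYG : Y * G = Y := by
    rw [hG, Matrix.mul_sub, Matrix.mul_one, Matrix.mul_smul, hYL, smul_zero, sub_zero]
  have hGY : G * Y = Y := by
    rw [hG, Matrix.sub_mul, Matrix.one_mul, Matrix.smul_mul, hLY, smul_zero, sub_zero]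
  have hPG : P * G = F := by rw [hPdef, hFdef, Matrix.sub_mul, Matrix.one_mul, hYG]
  have hFP : F * P = F := by
    rw [hFdef, hPdef, Matrix.mul_sub, Matrix.mul_one, Matrix.sub_mul, hGY, hYY, sub_self,
      sub_zero]
  -- eigenvalue facts
  have hasEig : ∀ (lam : ℝ) (v : Fin N → ℝ), v ≠ 0 → L *ᵥ v = lam • v →
      Module.End.HasEigenvalue (Matrix.toLin' L) lam := by
    intro lam v hv hveq
    exact Module.End.hasEigenvalue_of_hasEigenvector
      ⟨Module.End.mem_eigenspace_iff.2 (by rw [Matrix.toLin'_apply]; exact hveq), hv⟩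
  have hκ0 : 0 < κ := by
    have h0eig : Module.End.HasEigenvalue (Matrix.toLin' L) 0 := by
      apply hasEig 0 (fun _ => (1:ℝ))
      · intro h
        have := congrFun h ⟨0, hN⟩
        norm_num at this
      · ext i
        simp [mulVec, dotProduct, hrow i]
    have := hmax 0 h0eig
    linarith
  have hQnn : ∀ v : Fin N → ℝ, 0 ≤ v ⬝ᵥ (L *ᵥ v) := by
    intro v
    rw [hLdef, qform A hAs]
    apply mul_nonneg (by norm_num)
    exact Finset.sum_nonneg fun i _ => Finset.sum_nonneg fun j _ =>
      mul_nonneg (hApos i j) (sq_nonneg _)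
  have hker : ∀ v : Fin N → ℝ, L *ᵥ v = 0 → ∀ i j, v i = v j := by
    intro v hv
    have hQ : ∑ i, ∑ j, A i j * (v i - v j)^2 = 0 := by
      have hq := qform A hAs v
      rw [← hLdef, hv] at hq
      simp only [dotProduct_zero] at hq
      linarith
    have hterm : ∀ i j, A i j * (v i - v j)^2 = 0 := by
      intro i j
      have h1 := (Finset.sum_eq_zero_iff_of_nonneg
        (fun i _ => Finset.sum_nonneg fun j _ => mul_nonneg (hApos i j) (sq_nonneg _))).1 hQ
        i (Finset.mem_univ i)
      exact (Finset.sum_eq_zero_iff_of_nonneg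
        (fun j _ => mul_nonneg (hApos i j) (sq_nonneg _))).1 h1 j (Finset.mem_univ j)
    have hadj : ∀ i j, 0 < A i j → v i = v j := by
      intro i j hA'
      have h0 := hterm i j
      have h1 : (v i - v j)^2 = 0 := by
        rcases mul_eq_zero.1 h0 with h | h
        · exact absurd h (ne_of_gt hA')
        · exact h
      have := pow_eq_zero_iff (n := 2) (by norm_num) |>.1 h1
      linarith [sub_eq_zero.1 this]
    intro i j
    induction hconn i j with
    | refl => rfl
    | tail _ hstep ih => exact ih.trans (hadj _ _ hstep)
  have heigsmall : ∀ (μ : ℝ) (v : Fin N → ℝ), v ≠ 0 → F *ᵥ v = μ • v → |μ| < 1 := by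
    intro μ v hv hFv
    rcases eq_or_ne μ 0 with h0 | hμ0
    · rw [h0]; norm_num
    have hYv : Y *ᵥ v = 0 := by
      have hYF : Y * F = 0 := by rw [hFdef, Matrix.mul_sub, hYG, hYY, sub_self]
      have h1 : Y *ᵥ (F *ᵥ v) = μ • (Y *ᵥ v) := by rw [hFv, Matrix.mulVec_smul]
      rw [Matrix.mulVec_mulVec, hYF, Matrix.zero_mulVec] at h1
      exact (smul_eq_zero.1 h1.symm).resolve_left hμ0
    have hGv : G *ᵥ v = μ • v := by
      rw [hFdef, Matrix.sub_mulVec, hYv, sub_zero] at hFv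
      exact hFv
    have hLv : L *ᵥ v = (κ * (1 - μ)) • v := by
      rw [hG, Matrix.sub_mulVec, Matrix.one_mulVec, Matrix.smul_mulVec] at hGv
      have h2 : κ⁻¹ • (L *ᵥ v) = v - μ • v := by
        rw [← hGv]; abel
      have h3 : L *ᵥ v = κ • (v - μ • v) := by
        rw [← h2, smul_smul, mul_inv_cancel₀ (ne_of_gt hκ0), one_smul]
      rw [h3, smul_sub, smul_smul, ← sub_smul]
      congr 1
      ring
    set lam := κ * (1 - μ) with hlamdef
    have hlam_le : lam ≤ lamN := hmax lam (hasEig lam v hv hLv)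
    have hvv : 0 < v ⬝ᵥ v := by
      have h1 : v ⬝ᵥ v = ∑ i, (v i)^2 := by
        simp [dotProduct, sq]
      rw [h1]
      obtain ⟨i, hi⟩ := Function.ne_iff.1 hv
      exact Finset.sum_pos' (fun j _ => sq_nonneg _)
        ⟨i, Finset.mem_univ i, lt_of_le_of_ne (sq_nonneg _) (Ne.symm (pow_ne_zero 2 hi))⟩
    have hlam_nonneg : 0 ≤ lam := by
      have h1 : v ⬝ᵥ (L *ᵥ v) = lam * (v ⬝ᵥ v) := by
        rw [hLv, dotProduct_smul, smul_eq_mul]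
      nlinarith [hQnn v]
    have hlam_ne : lam ≠ 0 := by
      intro h0
      have hLv0 : L *ᵥ v = 0 := by rw [hLv, h0, zero_smul]
      have hconst := hker v hLv0
      have hYvv : Y *ᵥ v = v := by
        ext i
        simp only [mulVec, dotProduct, hYapp]
        rw [← Finset.mul_sum, Finset.sum_congr rfl (fun j _ => hconst j i)]
        rw [Finset.sum_const, Finset.card_univ, Fintype.card_fin, nsmul_eq_mul]
        field_simp
      rw [hYv] at hYvv
      exact hv hYvv.symm
    have hlam_pos : 0 < lam := lt_of_le_of_ne hlam_nonneg (Ne.symm hlam_ne)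
    have hlam_lt : lam < 2 * κ := lt_of_le_of_lt hlam_le (by linarith)
    have hμeq : μ = 1 - lam / κ := by
      field_simp [hlamdef]
      linarith
    have hdiv_pos : 0 < lam / κ := div_pos hlam_pos hκ0
    have hdiv_lt : lam / κ < 2 := (div_lt_iff₀ hκ0).2 (by linarith)
    rw [abs_lt]
    constructor <;> [linarith; linarith]
  -- F is hermitian
  have hLs : ∀ i j, L i j = L j i := by
    intro i j
    rw [hLdef]
    simp only [Matrix.sub_apply, Matrix.diagonal_apply]
    rw [hAs.apply i j]
    by_cases h : i = j
    · subst h; simp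
    · simp [h, Ne.symm h]
  have hFherm : F.IsHermitian := by
    have hsym : ∀ i j, F i j = F j i := by
      intro i j
      rw [hFdef, hG]
      simp only [Matrix.sub_apply, Matrix.smul_apply, Matrix.one_apply, hYapp, smul_eq_mul]
      rw [hLs i j]
      by_cases h : i = j
      · subst h; simp
      · simp [h, Ne.symm h]
    ext i j
    rw [Matrix.conjTranspose_apply, star_trivial]
    exact hsym j i
  -- the spectral bound r
  set r := Finset.univ.sup' Finset.univ_nonempty (fun i => |hFherm.eigenvalues i|) with hrdef
  have hle_r : ∀ i, |hFherm.eigenvalues i| ≤ r :=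
    fun i => Finset.le_sup' (fun i => |hFherm.eigenvalues i|) (Finset.mem_univ i)
  have hr0 : 0 ≤ r := le_trans (abs_nonneg _) (hle_r ⟨0, hN⟩)
  have hr1 : r < 1 := by
    rw [hrdef, Finset.sup'_lt_iff]
    intro i _
    apply heigsmall _ (hFherm.eigenvectorBasis i)
    · intro hzero
      apply hFherm.eigenvectorBasis.toBasis.ne_zero i
      apply (EuclideanSpace.equiv (Fin N) ℝ).injective
      simp only [OrthonormalBasis.coe_toBasis]
      exact hzero
    · exact hFherm.mulVec_eigenvectorBasis i
  have hcontr : ∀ u : Fin N → ℝ,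
      ‖(EuclideanSpace.equiv (Fin N) ℝ).symm (F *ᵥ u)‖
        ≤ r * ‖(EuclideanSpace.equiv (Fin N) ℝ).symm u‖ :=
    fun u => herm_contract F hFherm r hr0 hle_r ((EuclideanSpace.equiv (Fin N) ℝ).symm u)
  -- lift to the Kronecker product
  have hMcontr : ∀ u : Fin N × Fin m → ℝ,
      ‖(EuclideanSpace.equiv (Fin N × Fin m) ℝ).symm
          ((F ⊗ₖ (1 : Matrix (Fin m) (Fin m) ℝ)) *ᵥ u)‖
        ≤ r * ‖(EuclideanSpace.equiv (Fin N × Fin m) ℝ).symm u‖ := by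
    intro u
    have hsq : ‖(EuclideanSpace.equiv (Fin N × Fin m) ℝ).symm
        ((F ⊗ₖ (1 : Matrix (Fin m) (Fin m) ℝ)) *ᵥ u)‖^2
        ≤ (r * ‖(EuclideanSpace.equiv (Fin N × Fin m) ℝ).symm u‖)^2 := by
      rw [euclid_sq, mul_pow, euclid_sq]
      calc ∑ p : Fin N × Fin m, (((F ⊗ₖ (1 : Matrix (Fin m) (Fin m) ℝ)) *ᵥ u) p)^2
          = ∑ k : Fin m, ∑ i : Fin N, ((F *ᵥ fun j => u (j, k)) i)^2 := by
            rw [Fintype.sum_prod_type, Finset.sum_comm]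
            exact Finset.sum_congr rfl fun k _ => Finset.sum_congr rfl fun i _ => by
              rw [kron_mulVec]
        _ ≤ ∑ k : Fin m, r^2 * ∑ i : Fin N, (u (i, k))^2 := by
            refine Finset.sum_le_sum fun k _ => ?_
            have h1 := hcontr (fun j => u (j, k))
            have h2 := pow_le_pow_left₀ (norm_nonneg _) h1 2
            rw [euclid_sq, mul_pow, euclid_sq] at h2
            exact h2
        _ = r^2 * ∑ p : Fin N × Fin m, (u p)^2 := by
            rw [← Finset.mul_sum, Fintype.sum_prod_type, Finset.sum_comm]
    have h1 : (0:ℝ) ≤ r * ‖(EuclideanSpace.equiv (Fin N × Fin m) ℝ).symm u‖ := by positivity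
    calc ‖(EuclideanSpace.equiv (Fin N × Fin m) ℝ).symm
          ((F ⊗ₖ (1 : Matrix (Fin m) (Fin m) ℝ)) *ᵥ u)‖
        = Real.sqrt (‖(EuclideanSpace.equiv (Fin N × Fin m) ℝ).symm
            ((F ⊗ₖ (1 : Matrix (Fin m) (Fin m) ℝ)) *ᵥ u)‖^2) :=
          (Real.sqrt_sq (norm_nonneg _)).symm
      _ ≤ Real.sqrt ((r * ‖(EuclideanSpace.equiv (Fin N × Fin m) ℝ).symm u‖)^2) :=
          Real.sqrt_le_sqrt hsq
      _ = r * ‖(EuclideanSpace.equiv (Fin N × Fin m) ℝ).symm u‖ := Real.sqrt_sq h1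
  -- bound on the input term
  set B' := max B 0 with hB'def
  have hB'0 : 0 ≤ B' := le_max_right _ _
  have hwB : ∀ s p, |w s p| ≤ B' := by
    intro s p
    calc |w s p| = ‖w s p‖ := rfl
      _ ≤ ‖w s‖ := norm_le_pi_norm (w s) p
      _ ≤ B' := le_trans (hw s) (le_max_left _ _)
  have hPent : ∀ (p q : Fin N × Fin m),
      |(P ⊗ₖ (1 : Matrix (Fin m) (Fin m) ℝ)) p q| ≤ 2 := by
    intro ⟨i, k⟩ ⟨j, l⟩
    have h1 : (P ⊗ₖ (1 : Matrix (Fin m) (Fin m) ℝ)) (i, k) (j, l)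
        = P i j * (1 : Matrix (Fin m) (Fin m) ℝ) k l := rfl
    rw [h1, abs_mul]
    have hP1 : |P i j| ≤ 2 := by
      rw [hPdef]
      simp only [Matrix.sub_apply, Matrix.one_apply, hYapp]
      have hNinv : (N:ℝ)⁻¹ ≤ 1 := by
        rw [inv_le_one_iff₀]
        right
        exact_mod_cast hN
      have hNinv0 : (0:ℝ) ≤ (N:ℝ)⁻¹ := by positivity
      rw [abs_le]
      constructor <;> by_cases h : i = j <;> simp [h] <;> linarith
    have h12 : |(1 : Matrix (Fin m) (Fin m) ℝ) k l| ≤ 1 := by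
      simp only [Matrix.one_apply]
      by_cases h : k = l <;> simp [h]
    calc |P i j| * |(1 : Matrix (Fin m) (Fin m) ℝ) k l| ≤ 2 * 1 :=
      mul_le_mul hP1 h12 (abs_nonneg _) (by norm_num)
      _ = 2 := by norm_num
  set card := (Fintype.card (Fin N × Fin m) : ℝ) with hcard
  have hcard0 : 0 ≤ card := by positivity
  set C := Real.sqrt card * (card * (2 * B')) with hCdef
  have hC0 : 0 ≤ C := by positivity
  have hPwB : ∀ s, ‖(EuclideanSpace.equiv (Fin N × Fin m) ℝ).symm
      ((P ⊗ₖ (1 : Matrix (Fin m) (Fin m) ℝ)) *ᵥ w s)‖ ≤ C := by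
    intro s
    apply euclid_le_of_bound _ _ (by positivity)
    intro p
    calc |((P ⊗ₖ (1 : Matrix (Fin m) (Fin m) ℝ)) *ᵥ w s) p|
        = |∑ q, (P ⊗ₖ (1 : Matrix (Fin m) (Fin m) ℝ)) p q * w s q| := rfl
      _ ≤ ∑ q, |(P ⊗ₖ (1 : Matrix (Fin m) (Fin m) ℝ)) p q * w s q| :=
          Finset.abs_sum_le_sum_abs _ _
      _ ≤ ∑ _q : Fin N × Fin m, 2 * B' := by
          refine Finset.sum_le_sum fun q _ => ?_
          rw [abs_mul]
          exact mul_le_mul (hPent p q) (hwB s q) (abs_nonneg _) (by norm_num)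
      _ = card * (2 * B') := by
          rw [Finset.sum_const, Finset.card_univ, nsmul_eq_mul, hcard]
  -- the recurrence for the disagreement vector
  set σ : ℕ → (Fin N × Fin m → ℝ) :=
    fun s => (P ⊗ₖ (1 : Matrix (Fin m) (Fin m) ℝ)) *ᵥ x s with hσdef
  set a : ℕ → ℝ := fun s => ‖(EuclideanSpace.equiv (Fin N × Fin m) ℝ).symm (σ s)‖ with hadef
  set εs : ℕ → ℝ := fun s => |δ s| * C with hεdef
  have hrec : ∀ s, a (s+1) ≤ r * a s + εs (s+1) := by
    intro s
    have hx' := hx (s+1) (by omega)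
    rw [Nat.add_sub_cancel] at hx'
    have hσs : σ (s+1) = (F ⊗ₖ (1 : Matrix (Fin m) (Fin m) ℝ)) *ᵥ σ s
        + δ (s+1) • ((P ⊗ₖ (1 : Matrix (Fin m) (Fin m) ℝ)) *ᵥ w (s+1)) := by
      show (P ⊗ₖ (1 : Matrix (Fin m) (Fin m) ℝ)) *ᵥ x (s+1) = _
      rw [hx', Matrix.mulVec_add, Matrix.mulVec_smul]
      congr 1
      rw [Matrix.mulVec_mulVec, Matrix.mulVec_mulVec, ← Matrix.mul_kronecker_mul,
        ← Matrix.mul_kronecker_mul, Matrix.one_mul, hPG, hFP]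
    have htri : a (s+1) ≤ ‖(EuclideanSpace.equiv (Fin N × Fin m) ℝ).symm
          ((F ⊗ₖ (1 : Matrix (Fin m) (Fin m) ℝ)) *ᵥ σ s)‖
        + |δ (s+1)| * ‖(EuclideanSpace.equiv (Fin N × Fin m) ℝ).symm
          ((P ⊗ₖ (1 : Matrix (Fin m) (Fin m) ℝ)) *ᵥ w (s+1))‖ := by
      rw [hadef]
      simp only
      rw [hσs, map_add, _root_.map_smul]
      refine le_trans (norm_add_le _ _) ?_
      rw [norm_smul, Real.norm_eq_abs]
    refine le_trans htri ?_
    have h1 := hMcontr (σ s)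
    have h2 : |δ (s+1)| * ‖(EuclideanSpace.equiv (Fin N × Fin m) ℝ).symm
        ((P ⊗ₖ (1 : Matrix (Fin m) (Fin m) ℝ)) *ᵥ w (s+1))‖ ≤ |δ (s+1)| * C :=
      mul_le_mul_of_nonneg_left (hPwB (s+1)) (abs_nonneg _)
    rw [hεdef]
    exact add_le_add h1 h2
  have hεtend : Filter.Tendsto εs Filter.atTop (nhds 0) := by
    have h1 : Filter.Tendsto (fun s => |δ s|) Filter.atTop (nhds 0) := by
      simpa using hδ0.abs
    simpa using h1.mul_const C
  have hatend : Filter.Tendsto a Filter.atTop (nhds 0) :=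
    aux_seq_tendsto a εs r hr0 hr1 (fun s => norm_nonneg _)
      (fun s => mul_nonneg (abs_nonneg _) hC0) hrec hεtend
  -- conclude
  have hgoal : Filter.Tendsto σ Filter.atTop (nhds 0) := by
    rw [tendsto_zero_iff_norm_tendsto_zero]
    apply squeeze_zero (fun s => norm_nonneg _) _ hatend
    intro s
    rw [pi_norm_le_iff_of_nonneg (norm_nonneg _)]
    intro p
    exact coord_le_euclid (σ s) p
  exact hgoal
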